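/- Let p, q, k ∈ ℕ, let y : Fin p → ℝ be fixed, and let Ψ : ((Fin q ⊕ Fin q) → ℝ) → ℝ be differentiable. Define Φ : Matrix (Fin p ⊕ Fin p) (Fin q ⊕ Fin q) ℝ → ℝ by Φ(A) = Ψ(Matrix.vecMul (Sum.elim y y) A). Then for every matrix A, every i : Fin p and every column index c : Fin q ⊕ Fin q, the partial derivative of Φ with respect to the entry A (Sum.inl i) c equals the partial derivative of Φ with respect to the entry A (Sum.inr i) c. -/

import Mathlib

lemma vecMul_std_aux {m n : Type*} [Fintype m] [DecidableEq m] [DecidableEq n]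
    (v : m → ℝ) (r : m) (c j : n) :
    Matrix.vecMul v (Matrix.single r c 1) j
      = v r * (if c = j then 1 else 0) := by
  simp [Matrix.vecMul, dotProduct, Matrix.single, ite_and]

/-- **Same gradient lemma (abstract form).** If the loss `Φ` of the fused model factors
through the product of the duplicated hidden representation `(y, y)` with the fused
weight matrix `A`, then the partial derivative of `Φ` with respect to an entry in the
bottom row-block equals the partial derivative with respect to the corresponding entry
in the top row-block in the same column. The partial derivative with respect to an entry
is the derivative of `t ↦ Φ(A + t • stdBasisMatrix)` at `t = 0`. -/
theorem stmt_9 (p q k : ℕ) (y : Fin p → ℝ)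
    (Ψ : ((Fin q ⊕ Fin q) → ℝ) → ℝ) (hΨ : Differentiable ℝ Ψ)
    (Φ : Matrix (Fin p ⊕ Fin p) (Fin q ⊕ Fin q) ℝ → ℝ)
    (hΦ : Φ = fun A => Ψ (Matrix.vecMul (Sum.elim y y) A))
    (A : Matrix (Fin p ⊕ Fin p) (Fin q ⊕ Fin q) ℝ) (i : Fin p) (c : Fin q ⊕ Fin q) :
    deriv (fun t : ℝ => Φ (A + t • Matrix.single (Sum.inl i) c 1)) 0
      = deriv (fun t : ℝ => Φ (A + t • Matrix.single (Sum.inr i) c 1)) 0 := by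
  subst hΦ
  congr 1
  funext t
  apply congrArg
  funext j
  rw [Matrix.vecMul_add, Matrix.vecMul_add]
  simp [Matrix.smul_vecMul, Matrix.vecMul, dotProduct, Matrix.single, ite_and]
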